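/- Boundary-value trace inequality for affine functions on a cut triangle: there exists a constant C, independent of the position of the cut, such that for every triangle K of diameter h_K and every line segment Γ ⊂ K, and every affine function v on K, ‖v‖_{L²(Γ)} ≤ C (h_K^{-1/2}‖v‖_{L²(K)} + h_K^{1/2}‖∇v‖_{L²(K)}). -/

import Mathlib

open MeasureTheory Metric

lemma ball_vol (z : EuclideanSpace ℝ (Fin 2)) (r : ℝ) (hr : 0 ≤ r) :
    r ^ 2 ≤ (volume (ball z r)).toReal := by
  rw [EuclideanSpace.volume_ball]
  simp only [Fintype.card_fin]
  have h2 : Real.Gamma ((2 : ℕ) / 2 + 1) = 1 := by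
    norm_num [Real.Gamma_add_one, Real.Gamma_one]
  rw [h2]
  rw [← ENNReal.ofReal_pow hr, ← ENNReal.ofReal_mul (by positivity)]
  rw [ENNReal.toReal_ofReal (by positivity)]
  have h3 : Real.sqrt Real.pi ^ 2 = Real.pi := Real.sq_sqrt Real.pi_pos.le
  nlinarith [Real.pi_gt_three, sq_nonneg r]

theorem stmt5 (ρ : ℝ) (hρ : 0 < ρ) :
    ∃ C : ℝ, 0 < C ∧
      ∀ (p₁ p₂ p₃ : EuclideanSpace ℝ (Fin 2)),
        ∀ K : Set (EuclideanSpace ℝ (Fin 2)),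
        K = convexHull ℝ {p₁, p₂, p₃} →
        ∀ hK : ℝ, hK = Metric.diam K →
        (∃ z : EuclideanSpace ℝ (Fin 2), Metric.ball z (hK / ρ) ⊆ K) →
        ∀ q₁ q₂ : EuclideanSpace ℝ (Fin 2), q₁ ∈ K → q₂ ∈ K →
        ∀ (a : ℝ) (f : EuclideanSpace ℝ (Fin 2) →L[ℝ] ℝ),
        ∀ v : EuclideanSpace ℝ (Fin 2) → ℝ, (∀ x, v x = a + f x) →
        Real.sqrt (∫ t in (0 : ℝ)..1, (v (q₁ + t • (q₂ - q₁))) ^ 2 * ‖q₂ - q₁‖) ≤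
          C * ((Real.sqrt hK)⁻¹ * Real.sqrt (∫ x in K, (v x) ^ 2)
            + Real.sqrt hK * Real.sqrt (∫ x in K, ‖f‖ ^ 2)) := by
  refine ⟨2 * ρ + 1, by positivity, ?_⟩
  rintro p₁ p₂ p₃ K hKdef hK hKeq ⟨z, hz⟩ q₁ q₂ hq₁ hq₂ a f v hv
  have hfin : ({p₁, p₂, p₃} : Set (EuclideanSpace ℝ (Fin 2))).Finite :=
    Set.toFinite _
  have hKcpt : IsCompact K := hKdef ▸ hfin.isCompact_convexHull (𝕜 := ℝ)
  have hKconv : Convex ℝ K := hKdef ▸ convex_convexHull ℝ _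
  have hbd : Bornology.IsBounded K := hKcpt.isBounded
  have hK0 : 0 ≤ hK := hKeq ▸ Metric.diam_nonneg
  have hvc : Continuous v := by
    have : v = fun x => a + f x := funext hv
    rw [this]; exact continuous_const.add f.continuous
  have hv2c : Continuous (fun x => v x ^ 2) := hvc.pow 2
  set A := ∫ x in K, (v x) ^ 2 with hA
  set B := ∫ x in K, ‖f‖ ^ 2 with hB
  have hA0 : 0 ≤ A := setIntegral_nonneg hKcpt.measurableSet (fun x _ => sq_nonneg _)
  have hB0 : 0 ≤ B := setIntegral_nonneg hKcpt.measurableSet (fun x _ => sq_nonneg _)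
  rcases eq_or_lt_of_le hK0 with h0 | hpos
  · -- degenerate case hK = 0
    have hq : q₂ = q₁ := by
      have := Metric.dist_le_diam_of_mem hbd hq₂ hq₁
      rw [← hKeq, ← h0] at this
      exact dist_le_zero.mp this
    have : (∫ t in (0:ℝ)..1, (v (q₁ + t • (q₂ - q₁))) ^ 2 * ‖q₂ - q₁‖) = 0 := by
      simp [hq]
    rw [this, Real.sqrt_zero, ← h0, Real.sqrt_zero]
    simp
  · -- main case hK > 0
    set r := hK / ρ with hr_def
    have hr : 0 < r := by positivity
    have hzK : z ∈ K := hz (mem_ball_self hr)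
    -- r ≤ 2 hK
    have hr2hK : r ≤ 2 * hK := by
      set e : EuclideanSpace ℝ (Fin 2) := EuclideanSpace.single 0 1 with he
      have hne : ‖e‖ = 1 := by simp [he]
      have hx₁ : z + (r / 2) • e ∈ ball z r := by
        rw [mem_ball, dist_eq_norm]
        simp only [add_sub_cancel_left]
        rw [norm_smul, hne]
        simp only [mul_one]
        rw [Real.norm_eq_abs, abs_of_pos (by linarith)]
        linarith
      have := Metric.dist_le_diam_of_mem hbd (hz hx₁) hzK
      rw [← hKeq, dist_eq_norm] at this
      simp only [add_sub_cancel_left] at this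
      rw [norm_smul, hne, mul_one, Real.norm_eq_abs, abs_of_pos (by linarith)] at this
      linarith
    -- integrability
    have hintK : IntegrableOn (fun x => v x ^ 2) K volume := hv2c.continuousOn.integrableOn_compact hKcpt
    -- bound on ‖f‖
    have hfB : ‖f‖ * r ≤ Real.sqrt B := by
      have h1 : (∫ x in ball z r, ‖f‖ ^ 2) = (volume (ball z r)).toReal * ‖f‖ ^ 2 := by
        rw [setIntegral_const, smul_eq_mul]; rfl
      have h2 : (∫ x in ball z r, ‖f‖ ^ 2) ≤ B := by
        refine setIntegral_mono_set (integrableOn_const hKcpt.measure_lt_top.ne)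
          (Filter.Eventually.of_forall fun x => sq_nonneg _) (HasSubset.Subset.eventuallyLE hz)
      have h3 : r ^ 2 * ‖f‖ ^ 2 ≤ B := by
        refine le_trans ?_ (h1 ▸ h2)
        exact mul_le_mul_of_nonneg_right (ball_vol z r hr.le) (sq_nonneg _)
      have : (‖f‖ * r) ^ 2 ≤ B := by nlinarith
      calc ‖f‖ * r = Real.sqrt ((‖f‖ * r) ^ 2) := by
            rw [Real.sqrt_sq (by positivity)]
        _ ≤ Real.sqrt B := Real.sqrt_le_sqrt this
    -- minimum point
    have hcb : closedBall z (r / 2) ⊆ K :=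
      (closedBall_subset_ball (by linarith)).trans hz
    obtain ⟨x₀, hx₀s, hmin⟩ := (isCompact_closedBall z (r / 2)).exists_isMinOn
      ⟨z, mem_closedBall_self (by linarith)⟩ hv2c.continuousOn
    have hvx₀ : |v x₀| * (r / 2) ≤ Real.sqrt A := by
      have hvol2 : (r / 2) ^ 2 ≤ (volume (closedBall z (r / 2))).toReal := by
        refine le_trans (ball_vol z (r / 2) (by linarith)) ?_
        exact ENNReal.toReal_mono (measure_closedBall_lt_top.ne)
          (measure_mono ball_subset_closedBall)
      have h1 : (∫ x in closedBall z (r / 2), v x₀ ^ 2)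
          = (volume (closedBall z (r / 2))).toReal * v x₀ ^ 2 := by
        rw [setIntegral_const, smul_eq_mul]; rfl
      have h2 : (∫ x in closedBall z (r / 2), v x₀ ^ 2)
          ≤ (∫ x in closedBall z (r / 2), v x ^ 2) := by
        refine setIntegral_mono_on (integrableOn_const
          measure_closedBall_lt_top.ne) (hintK.mono_set hcb)
          measurableSet_closedBall (fun x hx => hmin hx)
      have h3 : (∫ x in closedBall z (r / 2), v x ^ 2) ≤ A := by
        refine setIntegral_mono_set hintK
          (Filter.Eventually.of_forall fun x => sq_nonneg _)
          (HasSubset.Subset.eventuallyLE hcb)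
      have h4 : (r / 2) ^ 2 * v x₀ ^ 2 ≤ A := by
        refine le_trans ?_ (le_trans (h1 ▸ h2) h3)
        exact mul_le_mul_of_nonneg_right hvol2 (sq_nonneg _)
      have : (|v x₀| * (r / 2)) ^ 2 ≤ A := by
        rw [mul_pow, sq_abs]; nlinarith
      calc |v x₀| * (r / 2) = Real.sqrt ((|v x₀| * (r / 2)) ^ 2) := by
            rw [Real.sqrt_sq (by positivity)]
        _ ≤ Real.sqrt A := Real.sqrt_le_sqrt this
    -- pointwise bound on K
    set M := |v x₀| + 2 * hK * ‖f‖ with hM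
    have hM0 : 0 ≤ M := by positivity
    have hbound : ∀ x ∈ K, |v x| ≤ M := by
      intro x hx
      have hdiff : v x = v x₀ + f (x - x₀) := by
        rw [hv x, hv x₀, map_sub]; ring
      have hxz : ‖x - z‖ ≤ hK := by
        rw [← dist_eq_norm, hKeq]; exact Metric.dist_le_diam_of_mem hbd hx hzK
      have hzx₀ : ‖z - x₀‖ ≤ hK := by
        rw [← dist_eq_norm, dist_comm, ← mem_closedBall, Metric.mem_closedBall] at *
        calc dist x₀ z ≤ r / 2 := hx₀s
          _ ≤ hK := by linarith
      have hxx₀ : ‖x - x₀‖ ≤ 2 * hK := by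
        calc ‖x - x₀‖ = ‖(x - z) + (z - x₀)‖ := by congr 1; abel
          _ ≤ ‖x - z‖ + ‖z - x₀‖ := norm_add_le _ _
          _ ≤ 2 * hK := by linarith
      calc |v x| = |v x₀ + f (x - x₀)| := by rw [hdiff]
        _ ≤ |v x₀| + |f (x - x₀)| := abs_add_le _ _
        _ ≤ |v x₀| + ‖f‖ * ‖x - x₀‖ := by
            exact add_le_add le_rfl (f.le_opNorm _)
        _ ≤ M := by
            rw [hM]
            have := mul_le_mul_of_nonneg_left hxx₀ (norm_nonneg f)
            linarith
    -- bound the LHS integral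
    have hseg : ∀ t ∈ Set.Icc (0:ℝ) 1, q₁ + t • (q₂ - q₁) ∈ K := by
      intro t ht
      have : q₁ + t • (q₂ - q₁) = (1 - t) • q₁ + t • q₂ := by
        rw [smul_sub, sub_smul, one_smul]; abel
      rw [this]
      exact hKconv hq₁ hq₂ (by linarith [ht.2]) ht.1 (by ring)
    have hlhs : (∫ t in (0:ℝ)..1, (v (q₁ + t • (q₂ - q₁))) ^ 2 * ‖q₂ - q₁‖)
        ≤ M ^ 2 * hK := by
      have hcont : Continuous fun t : ℝ => (v (q₁ + t • (q₂ - q₁))) ^ 2 * ‖q₂ - q₁‖ := by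
        exact ((hv2c.comp (continuous_const.add (continuous_id.smul continuous_const))).mul continuous_const)
      have hq12 : ‖q₂ - q₁‖ ≤ hK := by
        rw [← dist_eq_norm, hKeq]; exact Metric.dist_le_diam_of_mem hbd hq₂ hq₁
      calc (∫ t in (0:ℝ)..1, (v (q₁ + t • (q₂ - q₁))) ^ 2 * ‖q₂ - q₁‖)
          ≤ ∫ _t in (0:ℝ)..1, M ^ 2 * hK := by
            refine intervalIntegral.integral_mono_on zero_le_one
              (hcont.intervalIntegrable 0 1) (intervalIntegrable_const) ?_
            intro t ht
            have h1 : |v (q₁ + t • (q₂ - q₁))| ≤ M := hbound _ (hseg t ht)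
            have h2 : (v (q₁ + t • (q₂ - q₁))) ^ 2 ≤ M ^ 2 := by
              rw [← sq_abs]; exact pow_le_pow_left₀ (abs_nonneg _) h1 2
            have := mul_le_mul h2 hq12 (norm_nonneg _) (sq_nonneg M)
            linarith
        _ = M ^ 2 * hK := by simp
    -- assemble
    set s := Real.sqrt hK with hs
    have hs0 : 0 < s := Real.sqrt_pos.mpr hpos
    have hss : s * s = hK := Real.mul_self_sqrt hK0
    have step1 : Real.sqrt (∫ t in (0:ℝ)..1, (v (q₁ + t • (q₂ - q₁))) ^ 2 * ‖q₂ - q₁‖)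
        ≤ M * s := by
      calc Real.sqrt (∫ t in (0:ℝ)..1, (v (q₁ + t • (q₂ - q₁))) ^ 2 * ‖q₂ - q₁‖)
          ≤ Real.sqrt (M ^ 2 * hK) := Real.sqrt_le_sqrt hlhs
        _ = M * s := by
            rw [Real.sqrt_mul (sq_nonneg M), Real.sqrt_sq hM0]
    refine step1.trans ?_
    have hsinv : hK * s⁻¹ = s := by
      rw [← hss]; field_simp
    have key1 : |v x₀| * hK ≤ 2 * ρ * Real.sqrt A := by
      have h := mul_le_mul_of_nonneg_left hvx₀ (show (0:ℝ) ≤ 2 * ρ by positivity)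
      have he : 2 * ρ * (|v x₀| * (r / 2)) = |v x₀| * hK := by
        rw [hr_def]; field_simp
      rw [he] at h; exact h
    have key2 : hK * ‖f‖ ≤ ρ * Real.sqrt B := by
      have h := mul_le_mul_of_nonneg_left hfB hρ.le
      have he : ρ * (‖f‖ * r) = hK * ‖f‖ := by
        rw [hr_def]; field_simp
      rw [he] at h; exact h
    have h1 : |v x₀| * s ≤ 2 * ρ * (s⁻¹ * Real.sqrt A) := by
      have h := mul_le_mul_of_nonneg_right key1 (inv_nonneg.mpr hs0.le)
      calc |v x₀| * s = |v x₀| * (hK * s⁻¹) := by rw [hsinv]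
        _ = |v x₀| * hK * s⁻¹ := by ring
        _ ≤ 2 * ρ * Real.sqrt A * s⁻¹ := h
        _ = 2 * ρ * (s⁻¹ * Real.sqrt A) := by ring
    have h2 : 2 * hK * ‖f‖ * s ≤ 2 * ρ * (s * Real.sqrt B) := by
      have h := mul_le_mul_of_nonneg_right key2 (by positivity : (0:ℝ) ≤ 2 * s)
      calc 2 * hK * ‖f‖ * s = hK * ‖f‖ * (2 * s) := by ring
        _ ≤ ρ * Real.sqrt B * (2 * s) := h
        _ = 2 * ρ * (s * Real.sqrt B) := by ring
    have hbr : 0 ≤ s⁻¹ * Real.sqrt A + s * Real.sqrt B := by positivity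
    calc M * s = |v x₀| * s + 2 * hK * ‖f‖ * s := by rw [hM]; ring
      _ ≤ 2 * ρ * (s⁻¹ * Real.sqrt A) + 2 * ρ * (s * Real.sqrt B) := add_le_add h1 h2
      _ = 2 * ρ * (s⁻¹ * Real.sqrt A + s * Real.sqrt B) := by ring
      _ ≤ (2 * ρ + 1) * (s⁻¹ * Real.sqrt A + s * Real.sqrt B) := by nlinarith
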